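/- arXiv:1110.3147 — 5 statements merged into one kernel-verified Lean document; each statement's English description precedes it below -/
import Mathlib

section
/- If G is a Hamiltonian graph on n vertices (n ≥ 2), then the rainbow connection number of G satisfies rc(G) ≤ ⌈n/2⌉. -/
open SimpleGraph

/-- An edge coloring `c` makes `G` rainbow connected if any two vertices are joined
by a path whose edges have pairwise distinct colors. -/
def IsRainbowConnected {V α : Type*} (G : SimpleGraph V) (c : Sym2 V → α) : Prop :=
  ∀ u v : V, ∃ p : G.Walk u v, p.IsPath ∧ (p.edges.map c).Nodup

/-- The rainbow connection number of `G`. -/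
noncomputable def rc {V : Type*} (G : SimpleGraph V) : ℕ :=
  sInf {k | ∃ c : Sym2 V → Fin k, IsRainbowConnected G c}

/-- A vertex coloring `c` makes `G` rainbow vertex-connected if any two vertices are
joined by a path whose internal vertices have pairwise distinct colors. -/
def IsRainbowVertexConnected {V α : Type*} (G : SimpleGraph V) (c : V → α) : Prop :=
  ∀ u v : V, ∃ p : G.Walk u v, p.IsPath ∧ ((p.support.tail.dropLast).map c).Nodup

/-- The rainbow vertex-connection number of `G`. -/
noncomputable def rvc {V : Type*} (G : SimpleGraph V) : ℕ :=
  sInf {k | ∃ c : V → Fin k, IsRainbowVertexConnected G c}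

/-- `G` has `H` as a minor: there are disjoint nonempty connected branch sets in `G`,
one for each vertex of `H`, with an edge of `G` between the branch sets of any two
adjacent vertices of `H`. -/
def HasMinor {V W : Type*} (G : SimpleGraph V) (H : SimpleGraph W) : Prop :=
  ∃ f : W → Set V,
    (∀ w, (f w).Nonempty) ∧
    (∀ w, (G.induce (f w)).Connected) ∧
    (Pairwise fun w₁ w₂ => Disjoint (f w₁) (f w₂)) ∧
    (∀ w₁ w₂, H.Adj w₁ w₂ → ∃ v₁ ∈ f w₁, ∃ v₂ ∈ f w₂, G.Adj v₁ v₂)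

/-- A graph is outerplanar iff it has neither `K₄` nor `K_{2,3}` as a minor. -/
def IsOuterplanar {V : Type*} (G : SimpleGraph V) : Prop :=
  ¬ HasMinor G (completeGraph (Fin 4)) ∧
  ¬ HasMinor G (completeBipartiteGraph (Fin 2) (Fin 3))

/-- A graph is bridgeless if none of its edges is a bridge. -/
def IsBridgeless {V : Type*} (G : SimpleGraph V) : Prop :=
  ∀ e ∈ G.edgeSet, ¬ G.IsBridge e

lemma nat_mod_ne {n k d a b : ℕ} (h2k : n ≤ 2*k) (hkn : k ≤ n) (hk0 : 0 < k)
    (hd : 0 < d) (hdk : d < n - k) (ha : a < n) (hb : b = (a + d) % n) :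
    a % k ≠ b % k := by
  intro h
  by_cases hc : a + d < n
  · have hb' : b = a + d := by rw [hb, Nat.mod_eq_of_lt hc]
    subst hb'
    have hdvd : k ∣ (a + d) - a := (Nat.modEq_iff_dvd' (by omega)).mp h
    have : k ≤ a + d - a := Nat.le_of_dvd (by omega) hdvd
    omega
  · have hn0 : 0 < n := by omega
    have hb' : b = a + d - n := by
      rw [hb]
      have h1 : a + d - n < n := by omega
      have h2 : a + d = (a + d - n) + n := by omega
      rw [h2, Nat.add_mod_right, Nat.mod_eq_of_lt h1]; omega
    have hdvd : k ∣ a - b := (Nat.modEq_iff_dvd' (by omega)).mp h.symm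
    have hab : a - b = n - d := by omega
    rw [hab] at hdvd
    obtain ⟨c, hc2⟩ := hdvd
    rcases Nat.lt_or_ge c 2 with h1 | h2
    · interval_cases c <;> omega
    · have := Nat.mul_le_mul_left k h2
      omega

lemma aux_nodup {β : Type*} [DecidableEq β] (L : List β) (hL : L.Nodup) (k m : ℕ)
    (hk0 : 0 < k) (h2k : L.length ≤ 2*k) (hkn : k ≤ L.length)
    (s : List β) (hs : s <+: L.rotate m) (hl : s.length ≤ L.length - k) :
    (s.map (fun e => L.idxOf e % k)).Nodup := by
  set n := L.length with hn
  have hn0 : 0 < n := by omega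
  rw [List.nodup_iff_injective_get]
  intro i j hij
  have hi : (i : ℕ) < s.length := by simpa using i.2
  have hj : (j : ℕ) < s.length := by simpa using j.2
  have hsl : s.length ≤ (L.rotate m).length := hs.length_le
  simp only [List.get_eq_getElem, List.getElem_map] at hij
  have hval : ∀ (t : ℕ) (ht : t < s.length),
      L.idxOf (s[t]'ht) % k = ((t + m) % n) % k := by
    intro t ht
    have h1 : s[t]'ht = (L.rotate m)[t]'(by omega) := hs.getElem ht
    rw [h1, List.getElem_rotate]
    rw [List.Nodup.idxOf_getElem hL]
  rw [hval i hi, hval j hj] at hij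
  have key : ∀ x y : ℕ, x < y → y < s.length →
      ((x + m) % n) % k ≠ ((y + m) % n) % k := by
    intro x y hxy hy
    refine nat_mod_ne h2k hkn hk0 (d := y - x) (by omega) (by omega)
      (Nat.mod_lt _ hn0) ?_
    rw [Nat.mod_add_mod]
    congr 1
    omega
  rcases lt_trichotomy (i : ℕ) (j : ℕ) with h | h | h
  · exact absurd hij (key _ _ h hj)
  · exact Fin.ext h
  · exact absurd hij.symm (key _ _ h hi)

/-- If `G` is a Hamiltonian graph on `n ≥ 2` vertices, then `rc(G) ≤ ⌈n/2⌉`. -/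
theorem rc_le_of_isHamiltonian {V : Type*} [Fintype V] [DecidableEq V] (G : SimpleGraph V)
    (hn : 2 ≤ Fintype.card V) (hham : G.IsHamiltonian) :
    rc G ≤ (Fintype.card V + 1) / 2 := by
  classical
  set n := Fintype.card V with hn'
  set k := (n + 1) / 2 with hk'
  have hk0 : 0 < k := by omega
  obtain ⟨a, p, hp⟩ := hham (by omega)
  set L := p.edges with hL'
  have hLnd : L.Nodup := hp.isCycle.isTrail.edges_nodup
  have hlen : L.length = n := by rw [hL', Walk.length_edges, hp.length_eq]
  set c : Sym2 V → Fin k := fun e => ⟨L.idxOf e % k, Nat.mod_lt _ hk0⟩ with hc'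
  have key : ∀ (s : List (Sym2 V)) (m : ℕ), s <+: L.rotate m → s.length ≤ n - k →
      (s.map c).Nodup := by
    intro s m hs hsl
    have h0 := aux_nodup L hLnd k m hk0 (by omega) (by omega) s hs (by omega)
    refine List.Nodup.of_map Fin.val ?_
    rw [List.map_map]
    exact h0
  have hmem : k ∈ {k | ∃ c : Sym2 V → Fin k, IsRainbowConnected G c} := by
    refine ⟨c, fun u v => ?_⟩
    by_cases huv : u = v
    · subst huv; exact ⟨Walk.nil, Walk.IsPath.nil, by simp⟩
    have hu : u ∈ p.support := hp.mem_support u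
    set q := p.rotate u hu with hq'
    have hqc : q.IsCycle := hp.isCycle.rotate hu
    have hv : v ∈ q.support := by
      have hv1 : v ∈ p.support.tail := by
        rw [← Walk.support_tail_of_not_nil p hp.isCycle.not_nil]
        exact hp.isHamiltonian_tail.mem_support v
      have hv2 : v ∈ q.support.tail := (Walk.support_rotate p u hu).mem_iff.mpr hv1
      exact List.mem_of_mem_tail hv2
    set q1 := q.takeUntil v hv with hq1'
    set q2 := q.dropUntil v hv with hq2'
    have hspec : q1.append q2 = q := q.take_spec hv
    obtain ⟨m, hm⟩ : L ~r q.edges := (p.rotate_edges u hu).symm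
    have hqlen : q.length = n := by
      rw [← Walk.length_edges, ← hm, List.length_rotate, hlen]
    have hedges : q1.edges ++ q2.edges = q.edges := by
      rw [← Walk.edges_append, hspec]
    have hpre1 : q1.edges <+: L.rotate m := ⟨q2.edges, by rw [hm, hedges]⟩
    have hpre2 : q2.edges <+: L.rotate (m + q1.edges.length) := by
      rw [← List.rotate_rotate, hm, ← hedges, List.rotate_append_length_eq]
      exact ⟨q1.edges, rfl⟩
    have hlensum : q1.length + q2.length = n := by
      have := congrArg Walk.length hspec
      rw [Walk.length_append] at this
      omega
    -- paths
    have hTnd : q.support.tail.Nodup := hqc.support_nodup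
    have hsupp : q1.support ++ q2.support.tail = q.support := by
      rw [← Walk.support_append, hspec]
    have hTeq : q.support.tail = q1.support.tail ++ q2.support.tail := by
      have h1 := hsupp
      rw [q1.support_eq_cons, q.support_eq_cons, List.cons_append] at h1
      exact (List.cons.injEq _ _ _ _ ▸ h1).2.symm
    rw [hTeq, List.nodup_append] at hTnd
    obtain ⟨hnd1, hnd2, hdisj⟩ := hTnd
    have hv1 : v ∈ q1.support.tail := by
      have h2 := q1.end_mem_support
      rw [q1.support_eq_cons] at h2
      rcases List.mem_cons.mp h2 with h3 | h3
      · exact absurd h3.symm huv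
      · exact h3
    have hu2 : u ∈ q2.support.tail := by
      have h2 := q2.end_mem_support
      rw [q2.support_eq_cons] at h2
      rcases List.mem_cons.mp h2 with h3 | h3
      · exact absurd h3 huv
      · exact h3
    have hpath1 : q1.IsPath := by
      refine Walk.IsPath.mk' ?_
      rw [q1.support_eq_cons, List.nodup_cons]
      exact ⟨fun hmem => hdisj _ hmem _ hu2 rfl, hnd1⟩
    have hpath2 : q2.IsPath := by
      refine Walk.IsPath.mk' ?_
      rw [q2.support_eq_cons, List.nodup_cons]
      exact ⟨fun h => hdisj _ hv1 _ h rfl, hnd2⟩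
    by_cases hle : q1.length ≤ n - k
    · exact ⟨q1, hpath1, key q1.edges m hpre1 (by rw [Walk.length_edges]; exact hle)⟩
    · refine ⟨q2.reverse, hpath2.reverse, ?_⟩
      rw [Walk.edges_reverse, List.map_reverse, List.nodup_reverse]
      exact key q2.edges _ hpre2 (by rw [Walk.length_edges]; omega)
  exact Nat.sInf_le hmem
end

section
/- For every n ≥ 4, the cycle C_n on n vertices satisfies rc(C_n) ≤ ⌈n/2⌉. -/
open SimpleGraph

namespace RCC
open scoped Fin.CommRing
variable {m : ℕ}

lemma adj_succ (u : Fin (m+4)) : (cycleGraph (m+4)).Adj u (u+1) := by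
  rw [cycleGraph_adj']
  right
  have : u + 1 - u = 1 := by ring
  rw [this]
  simp [Fin.val_one]

def fwalk (u : Fin (m+4)) : (L : ℕ) → (cycleGraph (m+4)).Walk u (u + L)
  | 0 => Walk.nil.copy rfl (by simp)
  | L+1 => (Walk.cons (adj_succ u) (fwalk (u+1) L)).copy rfl (by push_cast; ring)

lemma fwalk_edges (L : ℕ) (u : Fin (m+4)) :
    (fwalk u L).edges = (List.range L).map (fun j => s(u + (j:ℕ), u + (j:ℕ) + 1)) := by
  induction L generalizing u with
  | zero => simp [fwalk]
  | succ L ih =>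
    rw [fwalk, Walk.edges_copy, Walk.edges_cons, ih, List.range_succ_eq_map]
    simp only [List.map_cons, List.map_map, Nat.cast_zero, add_zero]
    congr 1
    refine List.map_congr_left fun j _ => ?_
    have : u + 1 + (j:ℕ) = u + ((j+1 : ℕ) : Fin (m+4)) := by push_cast; ring
    simp [Function.comp, this]

lemma fwalk_support (L : ℕ) (u : Fin (m+4)) :
    (fwalk u L).support = (List.range (L+1)).map (fun j => u + (j:ℕ)) := by
  induction L generalizing u with
  | zero => simp [fwalk, List.range_succ]
  | succ L ih =>
    rw [fwalk, Walk.support_copy, Walk.support_cons, ih]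
    conv_rhs => rw [List.range_succ_eq_map]
    simp only [List.map_cons, List.map_map, Nat.cast_zero, add_zero]
    congr 1
    refine List.map_congr_left fun j _ => ?_
    have : u + 1 + (j:ℕ) = u + ((j+1 : ℕ) : Fin (m+4)) := by push_cast; ring
    simp [Function.comp, this]

lemma fwalk_isPath (L : ℕ) (hL : L < m + 4) (u : Fin (m+4)) : (fwalk u L).IsPath := by
  rw [Walk.isPath_def, fwalk_support]
  refine List.Nodup.map_on ?_ List.nodup_range
  intro j1 hj1 j2 hj2 h
  simp only [List.mem_range] at hj1 hj2
  have h2 : ((j1:ℕ) : Fin (m+4)) = ((j2:ℕ) : Fin (m+4)) := by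
    exact add_left_cancel h
  have := congrArg Fin.val h2
  rw [Fin.val_natCast, Fin.val_natCast] at this
  rw [Nat.mod_eq_of_lt (by omega), Nat.mod_eq_of_lt (by omega)] at this
  exact this


def tl : Sym2 (Fin (m+4)) → Fin (m+4) :=
  Sym2.lift ⟨fun a b => if b = a + 1 then a else if a = b + 1 then b else 0, by
    intro a b
    dsimp only
    by_cases h1 : b = a + 1 <;> by_cases h2 : a = b + 1
    · rw [if_pos h1, if_pos h2]
      have hcon : a = a + 2 := by nth_rewrite 1 [h2]; rw [h1]; ring
      have h0 : (0 : Fin (m+4)) = 2 :=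
        add_left_cancel (a := a) (by rw [add_zero, ← hcon])
      have := congrArg Fin.val h0
      simp [Fin.ext_iff] at this
      rw [Nat.mod_eq_of_lt (by omega)] at this
      omega
    · rw [if_pos h1, if_neg h2, if_pos h1]
    · rw [if_neg h1, if_pos h2, if_pos h2]
    · rw [if_neg h1, if_neg h2, if_neg h2, if_neg h1]⟩

def col (e : Sym2 (Fin (m+4))) : Fin ((m+5)/2) :=
  ⟨(tl e).val % ((m+5)/2), Nat.mod_lt _ (by omega)⟩

lemma col_mk (i : Fin (m+4)) : col s(i, i+1) = ⟨i.val % ((m+5)/2), Nat.mod_lt _ (by omega)⟩ := by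
  simp [col, tl]

lemma key (n : ℕ) (hn : 4 ≤ n) (x t : ℕ) (ht : 0 < t) (htL : t ≤ n/2 - 1)
    (h : (x % n) % ((n+1)/2) = ((x + t) % n) % ((n+1)/2)) : False := by
  set k := (n+1)/2 with hk
  rw [← Nat.mod_add_mod] at h
  set A := x % n with hA
  have hAn : A < n := Nat.mod_lt _ (by omega)
  by_cases hcase : A + t < n
  · rw [Nat.mod_eq_of_lt hcase] at h
    have hdvd : k ∣ (A + t - A) := (Nat.modEq_iff_dvd' (Nat.le_add_right _ _)).mp h
    rw [Nat.add_sub_cancel_left] at hdvd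
    have := Nat.le_of_dvd ht hdvd
    omega
  · have hB : (A + t) % n = A + t - n := by
      rw [Nat.mod_eq_sub_mod (by omega), Nat.mod_eq_of_lt (by omega)]
    rw [hB] at h
    have hBA : A + t - n ≤ A := by omega
    have hdvd : k ∣ (A - (A + t - n)) := (Nat.modEq_iff_dvd' hBA).mp h.symm
    have hAB : A - (A + t - n) = n - t := by omega
    rw [hAB] at hdvd
    have h1 : k ≤ n - t := Nat.le_of_dvd (by omega) hdvd
    have hdvd2 : k ∣ (n - t - k) := Nat.dvd_sub hdvd dvd_rfl
    have h3 : k ≤ n - t - k := Nat.le_of_dvd (by omega) hdvd2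
    omega


lemma val_add_nat (u : Fin (m+4)) (j : ℕ) : (u + (j:ℕ)).val = (u.val + j) % (m+4) := by
  rw [Fin.val_add, Fin.val_natCast, Nat.add_mod_mod]

lemma good (u v : Fin (m+4)) (h : (v - u).val ≤ (m+4)/2) :
    ∃ p : (cycleGraph (m+4)).Walk u v, p.IsPath ∧ (p.edges.map col).Nodup := by
  set L := (v - u).val with hL
  have hcopy : u + ((L:ℕ) : Fin (m+4)) = v := by
    rw [hL, Fin.cast_val_eq_self]; ring
  refine ⟨(fwalk u L).copy rfl hcopy, ?_, ?_⟩
  · rw [Walk.isPath_copy]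
    exact fwalk_isPath L (by omega) u
  · rw [Walk.edges_copy, fwalk_edges, List.map_map]
    have hfun : (col ∘ fun j : ℕ => s(u + (j : Fin (m+4)), u + (j : Fin (m+4)) + 1))
        = fun j : ℕ => (⟨(u + (j : Fin (m+4))).val % ((m+5)/2), Nat.mod_lt _ (by omega)⟩ : Fin ((m+5)/2)) := by
      funext j
      simp only [Function.comp_apply, col_mk]
    rw [hfun]
    refine List.Nodup.map_on ?_ List.nodup_range
    intro j1 hj1 j2 hj2 hg
    simp only [List.mem_range] at hj1 hj2
    rw [Fin.mk.injEq, val_add_nat, val_add_nat] at hg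
    by_contra hne
    rcases Nat.lt_or_ge j1 j2 with hlt | hge
    · exact key (m+4) (by omega) (u.val + j1) (j2 - j1) (by omega) (by omega)
        (by rw [show u.val + j1 + (j2 - j1) = u.val + j2 by omega]
            exact_mod_cast hg)
    · have hlt : j2 < j1 := by omega
      exact key (m+4) (by omega) (u.val + j2) (j1 - j2) (by omega) (by omega)
        (by rw [show u.val + j2 + (j1 - j2) = u.val + j1 by omega]
            exact_mod_cast hg.symm)

lemma val_sub_add (u v : Fin (m+4)) (huv : u ≠ v) : (u - v).val + (v - u).val = m + 4 := by
  have h1 : (u - v) + (v - u) = 0 := by ring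
  have h2 : ((u - v).val + (v - u).val) % (m+4) = 0 := by
    have := congrArg Fin.val h1
    rwa [Fin.val_add, Fin.val_zero] at this
  have hu : (u - v).val ≠ 0 :=
    fun h0 => (sub_ne_zero_of_ne huv) (Fin.ext (by simp [h0]))
  have hdvd := Nat.dvd_of_mod_eq_zero h2
  have hle := Nat.le_of_dvd (by omega) hdvd
  by_contra hne
  have hdvd2 : (m+4) ∣ ((u - v).val + (v - u).val - (m+4)) := Nat.dvd_sub hdvd dvd_rfl
  have := Nat.le_of_dvd (by omega) hdvd2
  have := (u - v).isLt
  have := (v - u).isLt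
  omega

end RCC

/-- For every `n ≥ 4`, the cycle `Cₙ` on `n` vertices satisfies `rc(Cₙ) ≤ ⌈n/2⌉`. -/
theorem rc_cycleGraph_le (n : ℕ) (hn : 4 ≤ n) :
    rc (SimpleGraph.cycleGraph n) ≤ (n + 1) / 2 := by
  obtain ⟨m, rfl⟩ : ∃ m, n = m + 4 := ⟨n - 4, by omega⟩
  apply Nat.sInf_le
  refine ⟨RCC.col, fun u v => ?_⟩
  by_cases h : (v - u).val ≤ (m+4)/2
  · exact RCC.good u v h
  · have hne : v ≠ u := by
      intro he; rw [he] at h; simp at h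
    have h' : (u - v).val ≤ (m+4)/2 := by
      have := RCC.val_sub_add v u hne
      omega
    obtain ⟨p, hp, hnd⟩ := RCC.good v u h'
    exact ⟨p.reverse, hp.reverse, by
      rwa [SimpleGraph.Walk.edges_reverse, List.map_reverse, List.nodup_reverse]⟩
end

section
/- Let G be a connected graph with minimum degree at least 2, and let D be a connected dominating set of G. Then rc(G) ≤ rc(G[D]) + 3, where G[D] is the subgraph of G induced by D. -/
open SimpleGraph

namespace RCaux2

variable {V : Type*}

lemma edges_dropUntil_sublist {G : SimpleGraph V} [DecidableEq V] {u v w : V}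
    (p : G.Walk v w) (h : u ∈ p.support) :
    (p.dropUntil u h).edges.Sublist p.edges := by
  conv_rhs => rw [← p.take_spec h]
  rw [Walk.edges_append]
  exact List.sublist_append_right _ _

lemma edges_bypass_sublist {G : SimpleGraph V} [DecidableEq V] {u v : V} (p : G.Walk u v) :
    p.bypass.edges.Sublist p.edges := by
  induction p with
  | nil => simp [Walk.bypass]
  | cons h p ih =>
    rw [Walk.bypass]
    split_ifs with hs
    · exact ((edges_dropUntil_sublist _ hs).trans ih).trans (List.sublist_cons_self _ _)
    · rw [Walk.edges_cons, Walk.edges_cons]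
      exact ih.cons₂ _

/-- `v` (outside `D`) has at least two neighbours in `D`. -/
def Case1 (G : SimpleGraph V) (D : Set V) (v : V) : Prop :=
  ∃ a b : V, a ∈ D ∧ b ∈ D ∧ a ≠ b ∧ G.Adj v a ∧ G.Adj v b

def Out2 (G : SimpleGraph V) (D : Set V) (v : V) : Prop :=
  v ∉ D ∧ ¬ Case1 G D v

open Classical in
noncomputable def d1 (G : SimpleGraph V) (D : Set V) (v : V) : V :=
  if h : Case1 G D v then h.choose else v

open Classical in
noncomputable def d2 (G : SimpleGraph V) (D : Set V) (v : V) : V :=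
  if h : Case1 G D v then h.choose_spec.choose else v

lemma d12_spec {G : SimpleGraph V} {D : Set V} {v : V} (h : Case1 G D v) :
    d1 G D v ∈ D ∧ d2 G D v ∈ D ∧ d1 G D v ≠ d2 G D v ∧
      G.Adj v (d1 G D v) ∧ G.Adj v (d2 G D v) := by
  rw [d1, d2, dif_pos h, dif_pos h]
  obtain ⟨h1, h2, h3, h4, h5⟩ := h.choose_spec.choose_spec
  exact ⟨h1, h2, h3, h4, h5⟩

open Classical in
noncomputable def dd (G : SimpleGraph V) (D : Set V) (v : V) : V :=
  if h : ∃ u, u ∈ D ∧ G.Adj v u then h.choose else v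

lemma dd_spec {G : SimpleGraph V} {D : Set V} {v : V} (h : ∃ u, u ∈ D ∧ G.Adj v u) :
    dd G D v ∈ D ∧ G.Adj v (dd G D v) := by
  rw [dd, dif_pos h]
  exact h.choose_spec

/-- The graph on vertices outside `D` having a unique neighbour in `D`. -/
def HH (G : SimpleGraph V) (D : Set V) : SimpleGraph V where
  Adj a b := G.Adj a b ∧ Out2 G D a ∧ Out2 G D b
  symm := ⟨fun a b ⟨h, ha, hb⟩ => ⟨h.symm, hb, ha⟩⟩
  loopless := ⟨fun a ⟨h, _⟩ => G.ne_of_adj h rfl⟩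

noncomputable def rep {G : SimpleGraph V} (c : G.ConnectedComponent) : V :=
  (Quot.exists_rep c).choose

lemma rep_spec {G : SimpleGraph V} (c : G.ConnectedComponent) :
    G.connectedComponentMk (rep c) = c :=
  (Quot.exists_rep c).choose_spec

noncomputable def root (G : SimpleGraph V) (D : Set V) (v : V) : V :=
  rep ((HH G D).connectedComponentMk v)

lemma root_reachable (G : SimpleGraph V) (D : Set V) (v : V) :
    (HH G D).Reachable (root G D v) v :=
  ConnectedComponent.exact (rep_spec ((HH G D).connectedComponentMk v))

lemma root_eq_of_adj {G : SimpleGraph V} {D : Set V} {u v : V} (h : (HH G D).Adj u v) :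
    root G D u = root G D v := by
  unfold root
  rw [ConnectedComponent.connectedComponentMk_eq_of_adj h]

noncomputable def xpar (G : SimpleGraph V) (D : Set V) (v : V) : Bool :=
  decide (Even ((HH G D).dist (root G D v) v))

def HasC1 (G : SimpleGraph V) (D : Set V) (v : V) : Prop :=
  ∃ u, G.Adj v u ∧ u ∉ D ∧ Case1 G D u

open Classical in
noncomputable def lat (G : SimpleGraph V) (D : Set V) (v : V) : V :=
  if h : HasC1 G D v then h.choose
  else if h : ∃ u, (HH G D).Adj v u ∧
      (HH G D).dist (root G D v) u + 1 = (HH G D).dist (root G D v) v then h.choose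
  else if h : ∃ u, (HH G D).Adj v u then h.choose else v

lemma nonDnbr {G : SimpleGraph V} {D : Set V} [Fintype V] [DecidableRel G.Adj]
    (hmin : ∀ v : V, 2 ≤ G.degree v) {v : V} (hv : Out2 G D v) :
    ∃ u, G.Adj v u ∧ u ∉ D := by
  by_contra hcon
  push_neg at hcon
  have h2 : 1 < (G.neighborFinset v).card := by
    rw [G.card_neighborFinset_eq_degree v]; exact hmin v
  obtain ⟨a, ha, b, hb, hab⟩ := Finset.one_lt_card.mp h2
  rw [SimpleGraph.mem_neighborFinset] at ha hb
  exact hv.2 ⟨a, b, hcon a ha, hcon b hb, hab, ha, hb⟩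

lemma Hnbr {G : SimpleGraph V} {D : Set V} [Fintype V] [DecidableRel G.Adj]
    (hmin : ∀ v : V, 2 ≤ G.degree v) {v : V} (hv : Out2 G D v) (h1 : ¬ HasC1 G D v) :
    ∃ u, (HH G D).Adj v u := by
  obtain ⟨u, hadj, huD⟩ := nonDnbr hmin hv
  by_cases hc : Case1 G D u
  · exact absurd ⟨u, hadj, huD, hc⟩ h1
  · exact ⟨u, hadj, hv, huD, hc⟩

lemma dist_pred' {H : SimpleGraph V} {r v : V} (hne : v ≠ r) (hreach : H.Reachable r v) :
    ∃ u, H.Adj v u ∧ H.dist r u + 1 = H.dist r v := by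
  obtain ⟨p, hp⟩ := hreach.exists_walk_length_eq_dist
  cases hq' : p.reverse with
  | nil => exact absurd rfl hne
  | cons h q =>
    rename_i u
    refine ⟨u, h, ?_⟩
    have hlen : q.length + 1 = H.dist r v := by
      have := congrArg SimpleGraph.Walk.length hq'
      rw [SimpleGraph.Walk.length_reverse] at this
      rw [← hp, this, SimpleGraph.Walk.length_cons]
    have h1 : H.dist r u ≤ q.length := by
      have := SimpleGraph.dist_le q.reverse
      rwa [SimpleGraph.Walk.length_reverse] at this
    have h2 : H.dist r v ≤ H.dist r u + 1 := by
      have hru : H.Reachable r u := ⟨q.reverse⟩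
      obtain ⟨m, hm⟩ := hru.exists_walk_length_eq_dist
      have := SimpleGraph.dist_le (m.concat h.symm)
      rwa [SimpleGraph.Walk.length_concat, hm] at this
    omega

lemma dist_pred {G : SimpleGraph V} {D : Set V} {v : V} (hne : v ≠ root G D v) :
    ∃ u, (HH G D).Adj v u ∧
      (HH G D).dist (root G D v) u + 1 = (HH G D).dist (root G D v) v :=
  dist_pred' hne (root_reachable G D v)

lemma lat_spec {G : SimpleGraph V} {D : Set V} [Fintype V] [DecidableRel G.Adj]
    (hmin : ∀ v : V, 2 ≤ G.degree v) {v : V} (hv : Out2 G D v) :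
    G.Adj v (lat G D v) ∧ lat G D v ∉ D ∧
      (Case1 G D (lat G D v) ∨
        (Out2 G D (lat G D v) ∧ xpar G D (lat G D v) ≠ xpar G D v)) := by
  rw [lat]
  split_ifs with h1 h2 h3
  · obtain ⟨ha, hb, hc⟩ := h1.choose_spec
    exact ⟨ha, hb, Or.inl hc⟩
  · obtain ⟨hadj, hdist⟩ := h2.choose_spec
    refine ⟨hadj.1, hadj.2.2.1, Or.inr ⟨hadj.2.2, ?_⟩⟩
    unfold xpar
    simp only [ne_eq, decide_eq_decide]
    have key : ∀ m n : ℕ, m + 1 = n → ¬(Even m ↔ Even n) := by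
      intro m n h
      subst h
      rw [Nat.even_add_one]
      tauto
    rw [← root_eq_of_adj hadj]
    exact key _ _ hdist
  · have hadj := h3.choose_spec
    have hroot : v = root G D v := by
      by_contra hne
      exact h2 (dist_pred hne)
    refine ⟨hadj.1, hadj.2.2.1, Or.inr ⟨hadj.2.2, ?_⟩⟩
    unfold xpar
    simp only [ne_eq, decide_eq_decide]
    have e0 : (HH G D).dist (root G D v) v = 0 := by
      rw [← hroot]
      exact SimpleGraph.dist_self
    have e1 : (HH G D).dist (root G D h3.choose) h3.choose = 1 := by
      rw [← root_eq_of_adj hadj, ← hroot]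
      exact SimpleGraph.dist_eq_one_iff_adj.mpr hadj
    rw [e0, e1]
    simp
  · exact absurd (Hnbr hmin hv h1) h3

noncomputable def colX (G : SimpleGraph V) (D : Set V) (k : ℕ) (v : V) : Fin (k+3) :=
  cond (xpar G D v) ⟨k, by omega⟩ ⟨k+1, by omega⟩

open Classical in
noncomputable def freshC (G : SimpleGraph V) (D : Set V) (k : ℕ) (v u : V) : Fin (k+3) :=
  if Case1 G D v then (if u = d2 G D v then ⟨k+1, by omega⟩ else ⟨k, by omega⟩)
  else colX G D k v

open Classical in
noncomputable def colF (G : SimpleGraph V) (D : Set V) (k : ℕ) (c' : Sym2 D → Fin k)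
    (a b : V) : Fin (k+3) :=
  if ha : a ∈ D then
    if hb : b ∈ D then (c' s(⟨a, ha⟩, ⟨b, hb⟩)).castLE (by omega)
    else freshC G D k b a
  else if hb : b ∈ D then freshC G D k a b else ⟨k+2, by omega⟩

lemma colF_symm (G : SimpleGraph V) (D : Set V) (k : ℕ) (c' : Sym2 D → Fin k)
    (a b : V) : colF G D k c' a b = colF G D k c' b a := by
  unfold colF
  by_cases ha : a ∈ D <;> by_cases hb : b ∈ D <;> simp [ha, hb]
  rw [Sym2.eq_swap]

noncomputable def colC (G : SimpleGraph V) (D : Set V) (k : ℕ) (c' : Sym2 D → Fin k) :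
    Sym2 V → Fin (k+3) :=
  Sym2.lift ⟨colF G D k c', colF_symm G D k c'⟩

lemma colC_mk (G : SimpleGraph V) (D : Set V) (k : ℕ) (c' : Sym2 D → Fin k) (a b : V) :
    colC G D k c' s(a, b) = colF G D k c' a b := rfl

lemma colC_DD (G : SimpleGraph V) (D : Set V) (k : ℕ) (c' : Sym2 D → Fin k) (a b : D) :
    colC G D k c' s(a.1, b.1) = (c' s(a, b)).castLE (by omega) := by
  rw [colC_mk]
  unfold colF
  rw [dif_pos a.2, dif_pos b.2]

lemma colC_XD (G : SimpleGraph V) (D : Set V) (k : ℕ) (c' : Sym2 D → Fin k) {a b : V}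
    (ha : a ∉ D) (hb : b ∈ D) : colC G D k c' s(a, b) = freshC G D k a b := by
  rw [colC_mk]
  unfold colF
  rw [dif_neg ha, dif_pos hb]

lemma colC_XX (G : SimpleGraph V) (D : Set V) (k : ℕ) (c' : Sym2 D → Fin k) {a b : V}
    (ha : a ∉ D) (hb : b ∉ D) : colC G D k c' s(a, b) = ⟨k+2, by omega⟩ := by
  rw [colC_mk]
  unfold colF
  rw [dif_neg ha, dif_neg hb]

end RCaux2

open RCaux2

set_option maxHeartbeats 2000000

/-- If `G` is a connected graph with minimum degree at least 2 and `D` is a connected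
dominating set of `G`, then `rc(G) ≤ rc(G[D]) + 3`. -/
theorem rc_le_rc_induce_connected_dominating_add_three {V : Type*} [Fintype V]
    (G : SimpleGraph V) [DecidableRel G.Adj] (hconn : G.Connected)
    (hmin : ∀ v : V, 2 ≤ G.degree v) (D : Set V)
    (hdom : ∀ v ∉ D, ∃ u ∈ D, G.Adj u v) (hDconn : (G.induce D).Connected) :
    rc G ≤ rc (G.induce D) + 3 := by
  classical
  -- the defining set for `rc (G.induce D)` is nonempty
  have hex : ∃ N, ∃ cN : Sym2 D → Fin N, IsRainbowConnected (G.induce D) cN := by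
    refine ⟨Fintype.card (Sym2 D), fun e => Fintype.equivFin (Sym2 D) e, fun u v => ?_⟩
    obtain ⟨w⟩ := hDconn.preconnected u v
    exact ⟨w.bypass, w.bypass_isPath,
      (w.bypass_isPath.isTrail.edges_nodup).map (Equiv.injective _)⟩
  obtain ⟨N, cN, hcN⟩ := hex
  have hmem : ∃ k, k = rc (G.induce D) ∧
      ∃ c' : Sym2 D → Fin k, IsRainbowConnected (G.induce D) c' :=
    ⟨rc (G.induce D), rfl,
      Nat.sInf_mem (s := {k | ∃ c : Sym2 D → Fin k, IsRainbowConnected (G.induce D) c})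
        ⟨N, cN, hcN⟩⟩
  obtain ⟨k, hk, c', hc'⟩ := hmem
  rw [← hk]
  obtain ⟨col, hDD, hXD, hXX⟩ : ∃ col : Sym2 V → Fin (k+3),
      (∀ a b : D, col s(a.1, b.1) = (c' s(a, b)).castLE (by omega)) ∧
      (∀ a b : V, a ∉ D → b ∈ D → col s(a, b) = freshC G D k a b) ∧
      (∀ a b : V, a ∉ D → b ∉ D → col s(a, b) = ⟨k+2, by omega⟩) :=
    ⟨colC G D k c', fun a b => colC_DD G D k c' a b,
      fun a b ha hb => colC_XD G D k c' ha hb, fun a b ha hb => colC_XX G D k c' ha hb⟩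
  set A : Fin (k+3) := ⟨k, by omega⟩ with hA
  set B : Fin (k+3) := ⟨k+1, by omega⟩ with hB
  set Cc : Fin (k+3) := ⟨k+2, by omega⟩ with hCc
  have hdom' : ∀ v ∉ D, ∃ u, u ∈ D ∧ G.Adj v u := by
    intro v hv
    obtain ⟨u, h1, h2⟩ := hdom v hv
    exact ⟨u, h1, h2.symm⟩
  have hcolXor : ∀ a : V, colX G D k a = A ∨ colX G D k a = B := by
    intro a
    cases hx : xpar G D a <;> simp [colX, hx, hA, hB]
  have hcolX_ne : ∀ a b : V, xpar G D a ≠ xpar G D b → colX G D k a ≠ colX G D k b := by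
    intro a b hne
    cases hxa : xpar G D a <;> cases hxb : xpar G D b <;>
      simp_all [colX, Fin.ext_iff]
  -- primary exits
  have primary : ∀ v ∉ D, ∃ p, p ∈ D ∧ ∃ w : G.Walk v p, ∃ ℓ : Fin (k+3),
      w.edges.map col = [ℓ] ∧ (ℓ = A ∨ ℓ = B) := by
    intro v hv
    by_cases h : Case1 G D v
    · obtain ⟨hd1, hd2, hne12, hadj1, hadj2⟩ := d12_spec h
      refine ⟨d1 G D v, hd1, Walk.cons hadj1 Walk.nil, A, ?_, Or.inl rfl⟩
      rw [Walk.edges_cons, Walk.edges_nil, List.map_cons, List.map_nil,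
        hXD v (d1 G D v) hv hd1]
      unfold freshC
      rw [if_pos h, if_neg hne12, hA]
    · obtain ⟨hdD, hdadj⟩ := dd_spec (hdom' v hv)
      refine ⟨dd G D v, hdD, Walk.cons hdadj Walk.nil, colX G D k v, ?_, hcolXor v⟩
      rw [Walk.edges_cons, Walk.edges_nil, List.map_cons, List.map_nil,
        hXD v (dd G D v) hv hdD]
      unfold freshC
      rw [if_neg h]
  -- adapted exits avoiding a given letter
  have adapted : ∀ v ∉ D, ∀ ℓ : Fin (k+3), (ℓ = A ∨ ℓ = B) →
      ∃ p, p ∈ D ∧ ∃ w : G.Walk v p, (w.edges.map col).Nodup ∧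
        ∀ x ∈ w.edges.map col, k ≤ x.val ∧ x ≠ ℓ := by
    have hAB : A ≠ B := by simp [hA, hB, Fin.ext_iff]
    have hCA : Cc ≠ A := by simp [hCc, hA, Fin.ext_iff]
    have hCB : Cc ≠ B := by simp [hCc, hB, Fin.ext_iff]
    have hAval : k ≤ A.val := by simp [hA]
    have hBval : k ≤ B.val := by simp [hB]
    have hCval : k ≤ Cc.val := by simp [hCc]
    have hXval : ∀ a : V, k ≤ (colX G D k a).val := by
      intro a
      rcases hcolXor a with hc | hc <;> rw [hc]
      all_goals first | exact hAval | exact hBval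
    have hCX : ∀ a : V, Cc ≠ colX G D k a := by
      intro a
      rcases hcolXor a with hc | hc <;> rw [hc]
      all_goals first | exact hCA | exact hCB
    intro v hv ℓ hℓ
    by_cases h : Case1 G D v
    · obtain ⟨hd1, hd2, hne12, hadj1, hadj2⟩ := d12_spec h
      have e1 : col s(v, d1 G D v) = A := by
        rw [hXD v _ hv hd1]
        unfold freshC
        rw [if_pos h, if_neg hne12, hA]
      have e2 : col s(v, d2 G D v) = B := by
        rw [hXD v _ hv hd2]
        unfold freshC
        rw [if_pos h, if_pos rfl, hB]
      rcases hℓ with rfl | rfl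
      · refine ⟨d2 G D v, hd2, Walk.cons hadj2 Walk.nil, ?_, ?_⟩ <;>
          rw [Walk.edges_cons, Walk.edges_nil, List.map_cons, List.map_nil, e2]
        · simp
        · intro x hx
          rw [List.mem_singleton] at hx
          subst hx
          exact ⟨hBval, hAB.symm⟩
      · refine ⟨d1 G D v, hd1, Walk.cons hadj1 Walk.nil, ?_, ?_⟩ <;>
          rw [Walk.edges_cons, Walk.edges_nil, List.map_cons, List.map_nil, e1]
        · simp
        · intro x hx
          rw [List.mem_singleton] at hx
          subst hx
          exact ⟨hAval, hAB⟩
    · have hout : Out2 G D v := ⟨hv, h⟩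
      by_cases hxl : colX G D k v = ℓ
      · -- lateral exit
        obtain ⟨hladj, hlD, hlcase⟩ := lat_spec hmin hout
        have ec : col s(v, lat G D v) = Cc := by
          rw [hXX v _ hv hlD, hCc]
        rcases hlcase with hc1 | ⟨hlout, hxne⟩
        · obtain ⟨hld1, hld2, hlne, hladj1, hladj2⟩ := d12_spec hc1
          have f1 : col s(lat G D v, d1 G D (lat G D v)) = A := by
            rw [hXD _ _ hlD hld1]
            unfold freshC
            rw [if_pos hc1, if_neg hlne, hA]
          have f2 : col s(lat G D v, d2 G D (lat G D v)) = B := by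
            rw [hXD _ _ hlD hld2]
            unfold freshC
            rw [if_pos hc1, if_pos rfl, hB]
          rcases hℓ with rfl | rfl
          · refine ⟨_, hld2, Walk.cons hladj (Walk.cons hladj2 Walk.nil), ?_, ?_⟩ <;>
              rw [Walk.edges_cons, Walk.edges_cons, Walk.edges_nil, List.map_cons,
                List.map_cons, List.map_nil, ec, f2]
            · simp [hCB]
            · intro x hx
              rcases List.mem_pair.mp hx with rfl | rfl
              · exact ⟨hCval, hCA⟩
              · exact ⟨hBval, hAB.symm⟩
          · refine ⟨_, hld1, Walk.cons hladj (Walk.cons hladj1 Walk.nil), ?_, ?_⟩ <;>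
              rw [Walk.edges_cons, Walk.edges_cons, Walk.edges_nil, List.map_cons,
                List.map_cons, List.map_nil, ec, f1]
            · simp [hCA]
            · intro x hx
              rcases List.mem_pair.mp hx with rfl | rfl
              · exact ⟨hCval, hCB⟩
              · exact ⟨hAval, hAB⟩
        · obtain ⟨hldD, hldadj⟩ := dd_spec (hdom' _ hlD)
          have fx : col s(lat G D v, dd G D (lat G D v)) = colX G D k (lat G D v) := by
            rw [hXD _ _ hlD hldD]
            unfold freshC
            rw [if_neg hlout.2]
          refine ⟨_, hldD, Walk.cons hladj (Walk.cons hldadj Walk.nil), ?_, ?_⟩ <;>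
            rw [Walk.edges_cons, Walk.edges_cons, Walk.edges_nil, List.map_cons,
              List.map_cons, List.map_nil, ec, fx]
          · simp [hCX (lat G D v)]
          · intro x hx
            rcases List.mem_pair.mp hx with rfl | rfl
            · refine ⟨hCval, ?_⟩
              rw [← hxl]
              exact hCX v
            · refine ⟨hXval _, ?_⟩
              rw [← hxl]
              exact hcolX_ne _ _ hxne
      · -- direct exit
        obtain ⟨hdD, hdadj⟩ := dd_spec (hdom' v hv)
        have e0 : col s(v, dd G D v) = colX G D k v := by
          rw [hXD v _ hv hdD]
          unfold freshC
          rw [if_neg h]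
        refine ⟨dd G D v, hdD, Walk.cons hdadj Walk.nil, ?_, ?_⟩ <;>
          rw [Walk.edges_cons, Walk.edges_nil, List.map_cons, List.map_nil, e0]
        · simp
        · intro x hx
          rw [List.mem_singleton] at hx
          subst hx
          exact ⟨hXval v, hxl⟩
  -- rainbow middles inside D
  have middle : ∀ p q : V, p ∈ D → q ∈ D → ∃ m : G.Walk p q,
      (m.edges.map col).Nodup ∧ ∀ x ∈ m.edges.map col, x.val < k := by
    intro p q hp hq
    obtain ⟨m', _, hnd⟩ := hc' ⟨p, hp⟩ ⟨q, hq⟩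
    have hcomp : ∀ e : Sym2 D, col (Sym2.map Subtype.val e) = (c' e).castLE (by omega) := by
      intro e
      induction e using Sym2.ind with
      | _ x y =>
        rw [Sym2.map_pair_eq]
        exact hDD x y
    have hedges : (m'.map (SimpleGraph.Embedding.induce D).toHom).edges.map col
        = (m'.edges.map c').map (Fin.castLE (by omega : k ≤ k + 3)) := by
      rw [Walk.edges_map, List.map_map, List.map_map]
      exact List.map_congr_left (fun e _ => hcomp e)
    refine ⟨m'.map (SimpleGraph.Embedding.induce D).toHom, ?_, ?_⟩
    · refine (congrArg List.Nodup hedges).mpr ?_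
      exact hnd.map (Fin.castLE_injective _)
    · intro x hx
      replace hx := (congrArg (x ∈ ·) hedges).mp hx
      obtain ⟨y, _, hy⟩ := List.mem_map.mp hx
      rw [← hy]
      exact y.isLt
    -- coordinated pairs of exits
  have pairSel : ∀ u v : V, ∃ p q : V, ∃ _ : p ∈ D, ∃ _ : q ∈ D,
      ∃ w1 : G.Walk u p, ∃ w2 : G.Walk v q,
      (w1.edges.map col).Nodup ∧ (w2.edges.map col).Nodup ∧
      (∀ x ∈ w1.edges.map col, k ≤ x.val) ∧ (∀ x ∈ w2.edges.map col, k ≤ x.val) ∧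
      List.Disjoint (w1.edges.map col) (w2.edges.map col) := by
    have hlet : ∀ ℓ : Fin (k+3), (ℓ = A ∨ ℓ = B) → k ≤ ℓ.val := by
      intro ℓ hℓ
      rcases hℓ with rfl | rfl <;> simp [hA, hB]
    intro u v
    by_cases hu : u ∈ D
    · by_cases hv : v ∈ D
      · exact ⟨u, v, hu, hv, Walk.nil, Walk.nil, by simp, by simp, by simp, by simp,
          by simp [List.Disjoint]⟩
      · obtain ⟨q, hq, w2, ℓ, hw2, hℓ⟩ := primary v hv
        refine ⟨u, q, hu, hq, Walk.nil, w2, by simp, ?_, by simp, ?_, ?_⟩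
        · rw [hw2]
          simp
        · rw [hw2]
          intro x hx
          rw [List.mem_singleton] at hx
          rw [hx]
          exact hlet ℓ hℓ
        · simp [List.Disjoint]
    · by_cases hv : v ∈ D
      · obtain ⟨p, hp, w1, ℓ, hw1, hℓ⟩ := primary u hu
        refine ⟨p, v, hp, hv, w1, Walk.nil, ?_, by simp, ?_, by simp, ?_⟩
        · rw [hw1]
          simp
        · rw [hw1]
          intro x hx
          rw [List.mem_singleton] at hx
          rw [hx]
          exact hlet ℓ hℓ
        · rw [hw1]
          simp [List.Disjoint]
      · obtain ⟨q, hq, w2, ℓ, hw2, hℓ⟩ := primary v hv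
        obtain ⟨p, hp, w1, hnd1, hprop⟩ := adapted u hu ℓ hℓ
        refine ⟨p, q, hp, hq, w1, w2, hnd1, ?_, fun x hx => (hprop x hx).1, ?_, ?_⟩
        · rw [hw2]
          simp
        · rw [hw2]
          intro x hx
          rw [List.mem_singleton] at hx
          rw [hx]
          exact hlet ℓ hℓ
        · rw [hw2]
          intro x hx1 hx2
          rw [List.mem_singleton] at hx2
          subst hx2
          exact (hprop _ hx1).2 rfl
  have main : IsRainbowConnected G col := by
    intro u v
    obtain ⟨p, q, hp, hq, w1, w2, hnd1, hnd2, hge1, hge2, hdisj⟩ := pairSel u v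
    obtain ⟨m, hndm, hltm⟩ := middle p q hp hq
    set W := w1.append (m.append w2.reverse) with hW
    refine ⟨W.bypass, W.bypass_isPath, ?_⟩
    refine List.Nodup.sublist ((edges_bypass_sublist W).map col) ?_
    rw [hW, Walk.edges_append, Walk.edges_append, Walk.edges_reverse,
      List.map_append, List.map_append, List.map_reverse]
    refine List.Nodup.append hnd1 (List.Nodup.append hndm (List.nodup_reverse.mpr hnd2) ?_) ?_
    · intro x hxm hxr
      rw [List.mem_reverse] at hxr
      exact absurd (hltm x hxm) (by have := hge2 x hxr; omega)
    · intro x hx1 hx2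
      rw [List.mem_append] at hx2
      rcases hx2 with hxm | hxr
      · exact absurd (hltm x hxm) (by have := hge1 x hx1; omega)
      · rw [List.mem_reverse] at hxr
        exact hdisj hx1 hxr
  exact Nat.sInf_le ⟨col, main⟩
end

section
/- For a connected graph G on n ≥ 2 vertices, rc(G) = n − 1 if and only if G is a tree. -/
open SimpleGraph

lemma aux_reach {V : Type*} {G : SimpleGraph V} {a b : V}
    (hb : ¬ G.IsBridge s(a,b)) (hG : G.Adj a b) :
    ∀ {x y : V}, G.Walk x y → (G \ fromEdgeSet {s(a,b)}).Reachable x y := by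
  intro x y w
  induction w with
  | nil => exact Reachable.refl _
  | @cons u v z h p ih =>
    refine Reachable.trans ?_ ih
    by_cases he : s(u, v) = s(a, b)
    · rw [SimpleGraph.isBridge_iff] at hb
      push_neg at hb
      have hr : (G \ fromEdgeSet {s(a,b)}).Reachable a b := hb
      rw [Sym2.eq_iff] at he
      rcases he with ⟨rfl, rfl⟩ | ⟨rfl, rfl⟩
      · exact hr
      · exact hr.symm
    · exact SimpleGraph.Adj.reachable (by simp [SimpleGraph.sdiff_adj, h, he])

lemma connected_delete_nonbridge {V : Type*} {G : SimpleGraph V} {e : Sym2 V}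
    (he : e ∈ G.edgeSet) (hb : ¬ G.IsBridge e) (hc : G.Connected) :
    (G \ fromEdgeSet {e}).Connected := by
  induction e using Sym2.ind with
  | _ a b =>
    have hne : Nonempty V := hc.nonempty
    refine SimpleGraph.Connected.mk fun x y => ?_
    obtain ⟨w⟩ := hc.preconnected x y
    exact aux_reach hb he w

lemma exists_spanning_tree_aux {V : Type*} [Finite V] :
    ∀ n (G : SimpleGraph V), G.edgeSet.ncard = n → G.Connected → ∃ T, T ≤ G ∧ T.IsTree := by
  intro n
  induction n using Nat.strong_induction_on with
  | _ n ih =>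
    intro G hn hc
    by_cases ha : G.IsAcyclic
    · exact ⟨G, le_rfl, ⟨hc, ha⟩⟩
    · obtain ⟨v, w, hw⟩ : ∃ (v : V) (w : G.Walk v v), w.IsCycle := by
        simpa [SimpleGraph.IsAcyclic] using ha
      obtain ⟨e, he⟩ : ∃ e, e ∈ w.edges := by
        apply List.exists_mem_of_ne_nil
        have h3 := hw.three_le_length
        intro hnil
        have : w.edges.length = 0 := by simp [hnil]
        rw [SimpleGraph.Walk.length_edges] at this
        omega
      have heG : e ∈ G.edgeSet := w.edges_subset_edgeSet he
      have hnb : ¬ G.IsBridge e := fun hbr =>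
        (SimpleGraph.isBridge_iff_forall_cycle_notMem heG).mp hbr w hw he
      have hconn' := connected_delete_nonbridge heG hnb hc
      have hes : (G \ fromEdgeSet {e}).edgeSet = G.edgeSet \ {e} := by
        rw [edgeSet_sdiff, edgeSet_fromEdgeSet, edgeSet_sdiff_sdiff_isDiag]
      have hlt : (G \ fromEdgeSet {e}).edgeSet.ncard < n := by
        rw [hes, ← hn]
        exact Set.ncard_diff_singleton_lt_of_mem heG (Set.toFinite _)
      obtain ⟨T, hT1, hT2⟩ := ih _ hlt _ rfl hconn'
      exact ⟨T, le_trans hT1 sdiff_le, hT2⟩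

lemma exists_spanning_tree {V : Type*} [Finite V] {G : SimpleGraph V} (hc : G.Connected) :
    ∃ T, T ≤ G ∧ T.IsTree :=
  exists_spanning_tree_aux _ G rfl hc


lemma tree_common_path {V : Type*} {G : SimpleGraph V} (hT : G.IsTree)
    {d f : Sym2 V} (hd : d ∈ G.edgeSet) (hf : f ∈ G.edgeSet) (hdf : d ≠ f) :
    ∃ (x y : V) (p : G.Walk x y), p.IsPath ∧ d ∈ p.edges ∧ f ∈ p.edges := by
  classical
  induction d using Sym2.ind with
  | _ a b =>
  induction f using Sym2.ind with
  | _ s t =>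
  have hadj : G.Adj a b := hd
  have hst : G.Adj s t := hf
  -- Step 1: a path ending at s containing s(a,b)
  have step1 : ∃ (u : V) (W : G.Walk u s), W.IsPath ∧ s(a, b) ∈ W.edges := by
    obtain ⟨W0, hW0, hW0u⟩ := hT.existsUnique_path a s
    by_cases hmem : s(a, b) ∈ W0.edges
    · exact ⟨a, W0, hW0, hmem⟩
    · have hbs : b ∉ W0.support := by
        intro hbs
        have h1 : W0.takeUntil b hbs = Walk.cons hadj Walk.nil := by
          obtain ⟨P0, hP0, hP0u⟩ := hT.existsUnique_path a b
          have e1 := hP0u _ (hW0.takeUntil hbs)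
          have e2 := hP0u (Walk.cons hadj Walk.nil)
            (by simp [Walk.cons_isPath_iff, hadj.ne])
          rw [e1, e2]
        apply hmem
        apply W0.edges_takeUntil_subset hbs
        rw [h1]
        simp
      refine ⟨b, Walk.cons hadj.symm W0, ?_, ?_⟩
      · rw [Walk.cons_isPath_iff]; exact ⟨hW0, hbs⟩
      · simp [Sym2.eq_swap]
  obtain ⟨u, W, hW, hdW⟩ := step1
  by_cases hfW : s(s, t) ∈ W.edges
  · exact ⟨u, s, W, hW, hdW, hfW⟩
  · have hts : t ∉ W.support := by
      intro hts
      have h1 : W.dropUntil t hts = Walk.cons hst.symm Walk.nil := by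
        obtain ⟨P0, hP0, hP0u⟩ := hT.existsUnique_path t s
        have e1 := hP0u _ (hW.dropUntil hts)
        have e2 := hP0u (Walk.cons hst.symm Walk.nil)
          (by simp [Walk.cons_isPath_iff, hst.ne'])
        rw [e1, e2]
      apply hfW
      apply W.edges_dropUntil_subset hts
      rw [h1]
      simp [Sym2.eq_swap]
    refine ⟨u, t, W.append (Walk.cons hst Walk.nil), ?_, ?_, ?_⟩
    · rw [Walk.isPath_def, Walk.support_append]
      simp only [Walk.support_cons, Walk.support_nil, List.tail_cons]
      rw [List.nodup_append]
      exact ⟨hW.support_nodup, List.nodup_singleton _,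
        by simpa [List.disjoint_singleton] using fun a (ha : a ∈ W.support) (h : a = t) => hts (h ▸ ha)⟩
    · rw [Walk.edges_append]; exact List.mem_append_left _ hdW
    · rw [Walk.edges_append]; simp

lemma rc_of_tree {V : Type*} [Fintype V] {G : SimpleGraph V}
    (hn : 2 ≤ Fintype.card V) (hT : G.IsTree) : rc G = Fintype.card V - 1 := by
  classical
  haveI : Fintype G.edgeSet := Fintype.ofFinite _
  have hcard : G.edgeFinset.card + 1 = Fintype.card V := hT.card_edgeFinset
  have hm : G.edgeFinset.card = Fintype.card V - 1 := by omega
  -- the injective coloring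
  let eqv := G.edgeFinset.equivFin
  let c : Sym2 V → Fin (Fintype.card V - 1) := fun x =>
    if h : x ∈ G.edgeFinset then (finCongr hm) (eqv ⟨x, h⟩) else ⟨0, by omega⟩
  have hcinj : ∀ d ∈ G.edgeSet, ∀ g ∈ G.edgeSet, c d = c g → d = g := by
    intro d hd g hg hdg
    have hd' : d ∈ G.edgeFinset := by rwa [mem_edgeFinset]
    have hg' : g ∈ G.edgeFinset := by rwa [mem_edgeFinset]
    simp only [c, dif_pos hd', dif_pos hg'] at hdg
    have := eqv.injective ((finCongr hm).injective hdg)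
    exact Subtype.ext_iff.mp this
  have hrb : IsRainbowConnected G c := by
    intro u v
    obtain ⟨w⟩ := hT.isConnected.preconnected u v
    refine ⟨w.toPath, w.toPath.2, ?_⟩
    refine List.Nodup.map_on ?_ (w.toPath.2.isTrail.edges_nodup)
    intro d hdw g hgw hdg
    exact hcinj d ((w.toPath : G.Walk u v).edges_subset_edgeSet hdw) g
      ((w.toPath : G.Walk u v).edges_subset_edgeSet hgw) hdg
  have hne : {k | ∃ c : Sym2 V → Fin k, IsRainbowConnected G c}.Nonempty :=
    ⟨Fintype.card V - 1, c, hrb⟩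
  have hup : rc G ≤ Fintype.card V - 1 := Nat.sInf_le ⟨c, hrb⟩
  have hmem := Nat.sInf_mem hne
  obtain ⟨c', hc'⟩ := hmem
  have hlow : Fintype.card V - 1 ≤ rc G := by
    have hinj : ∀ d ∈ G.edgeFinset, ∀ g ∈ G.edgeFinset, c' d = c' g → d = g := by
      intro d hd g hg hdg
      by_contra hdgne
      obtain ⟨x, y, p, hp, hdp, hgp⟩ :=
        tree_common_path hT (mem_edgeFinset.mp hd) (mem_edgeFinset.mp hg) hdgne
      obtain ⟨q, hq, hnd⟩ := hc' x y
      have hqp : q = p := (hT.existsUnique_path x y).unique hq hp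
      subst hqp
      exact hdgne (List.inj_on_of_nodup_map hnd hdp hgp hdg)
    have hcle : G.edgeFinset.card ≤ (Finset.univ : Finset (Fin (rc G))).card :=
      Finset.card_le_card_of_injOn c' (fun e _ => Finset.mem_univ (c' e))
        (fun a ha b hb hab => hinj a ha b hb hab)
    rw [Finset.card_univ, Fintype.card_fin] at hcle
    omega
  omega


lemma aux_surgery {V α : Type*} {G T : SimpleGraph V} (hle : T ≤ G)
    {x y a b : V} (hab : G.Adj a b) (hnT : ¬ T.Adj a b)
    (X : T.Walk x a) (M : T.Walk a b) (Y : T.Walk b y)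
    (hR : (X.append (M.append Y)).IsPath)
    (c : Sym2 V → α) (f1 fl : Sym2 V)
    (hf1T : f1 ∈ T.edgeSet) (hf1M : f1 ∈ M.edges) (hflM : fl ∈ M.edges) (hne1 : f1 ≠ fl)
    (hinj : ∀ d ∈ T.edgeSet, ∀ g ∈ T.edgeSet, d ≠ fl → g ≠ fl → c d = c g → d = g)
    (hce : c s(a, b) = c f1) :
    ∃ p : G.Walk x y, p.IsPath ∧ (p.edges.map c).Nodup := by
  classical
  have hXG : ∀ e ∈ X.edges, e ∈ G.edgeSet := fun e he =>
    edgeSet_mono hle (X.edges_subset_edgeSet he)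
  have hYG : ∀ e ∈ Y.edges, e ∈ G.edgeSet := fun e he =>
    edgeSet_mono hle (Y.edges_subset_edgeSet he)
  -- support analysis
  have hsupR : (X.append (M.append Y)).support
      = X.support ++ (M.support.tail ++ Y.support.tail) := by
    rw [Walk.support_append, Walk.tail_support_append]
  have hnodR : (X.support ++ (M.support.tail ++ Y.support.tail)).Nodup := by
    have := hR.support_nodup; rwa [hsupR] at this
  obtain ⟨nX, nMY, dXMY⟩ := List.nodup_append.mp hnodR
  obtain ⟨nM, nY, dMY⟩ := List.nodup_append.mp nMY
  have hbM : b ∈ M.support.tail := by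
    have hb := M.end_mem_support
    rw [M.support_eq_cons] at hb
    rcases List.mem_cons.mp hb with h | h
    · exact absurd h.symm hab.ne
    · exact h
  -- edge analysis
  have hEnod : (X.edges ++ (M.edges ++ Y.edges)).Nodup := by
    have := hR.isTrail.edges_nodup
    rwa [Walk.edges_append, Walk.edges_append] at this
  obtain ⟨eX, eMY, dEXMY⟩ := List.nodup_append.mp hEnod
  obtain ⟨eM, eY, dEMY⟩ := List.nodup_append.mp eMY
  have heT : s(a, b) ∉ T.edgeSet := by rwa [mem_edgeSet]
  have hmemf : ∀ z ∈ X.edges ++ s(a, b) :: Y.edges,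
      z = s(a, b) ∨ (z ∈ T.edgeSet ∧ z ≠ fl ∧ z ≠ f1) := by
    intro z hz
    rcases List.mem_append.mp hz with hzX | hz2
    · refine Or.inr ⟨X.edges_subset_edgeSet hzX, ?_, ?_⟩
      · rintro rfl; exact dEXMY _ hzX _ (List.mem_append_left _ hflM) rfl
      · rintro rfl; exact dEXMY _ hzX _ (List.mem_append_left _ hf1M) rfl
    · rcases List.mem_cons.mp hz2 with h | hzY
      · exact Or.inl h
      · refine Or.inr ⟨Y.edges_subset_edgeSet hzY, ?_, ?_⟩
        · rintro rfl; exact dEMY _ hflM _ hzY rfl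
        · rintro rfl; exact dEMY _ hf1M _ hzY rfl
  refine ⟨(X.transfer G hXG).append (Walk.cons hab (Y.transfer G hYG)), ?_, ?_⟩
  · -- IsPath
    rw [Walk.isPath_def, Walk.support_append, Walk.support_cons, Walk.support_transfer,
      Walk.support_transfer, List.tail_cons]
    rw [List.nodup_append]
    refine ⟨nX, ?_, ?_⟩
    · rw [Y.support_eq_cons, List.nodup_cons]
      exact ⟨fun h => dMY _ hbM _ h rfl, nY⟩
    · intro z hzX z' hzY hzz; subst hzz
      rw [Y.support_eq_cons] at hzY
      rcases List.mem_cons.mp hzY with rfl | h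
      · exact dXMY _ hzX _ (List.mem_append_left _ hbM) rfl
      · exact dXMY _ hzX _ (List.mem_append_right _ h) rfl
  · -- rainbow
    have hedges : ((X.transfer G hXG).append (Walk.cons hab (Y.transfer G hYG))).edges
        = X.edges ++ s(a, b) :: Y.edges := by
      rw [Walk.edges_append, Walk.edges_cons, Walk.edges_transfer, Walk.edges_transfer]
    rw [hedges]
    refine List.Nodup.map_on ?_ ?_
    · intro d hd g hg hdg
      rcases hmemf d hd with rfl | ⟨hdT, hdfl, hdf1⟩
      · rcases hmemf g hg with rfl | ⟨hgT, hgfl, hgf1⟩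
        · rfl
        · exact absurd (hinj g hgT f1 hf1T hgfl hne1 (hdg.symm.trans hce)) hgf1
      · rcases hmemf g hg with rfl | ⟨hgT, hgfl, hgf1⟩
        · exact absurd (hinj d hdT f1 hf1T hdfl hne1 (hdg.trans hce)) hdf1
        · exact hinj d hdT g hgT hdfl hgfl hdg
    · rw [List.nodup_append]
      refine ⟨eX, ?_, ?_⟩
      · rw [List.nodup_cons]
        exact ⟨fun h => heT (Y.edges_subset_edgeSet h), eY⟩
      · intro z hzX z' hz hzz; subst hzz
        rcases List.mem_cons.mp hz with rfl | hzY
        · exact heT (X.edges_subset_edgeSet hzX)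
        · exact dEXMY _ hzX _ (List.mem_append_right _ hzY) rfl

lemma rainbow_of_not_tree {V : Type*} [Fintype V] {G : SimpleGraph V}
    (hc : G.Connected) (hnt : ¬ G.IsTree) :
    ∃ c : Sym2 V → Fin (Fintype.card V - 2), IsRainbowConnected G c := by
  classical
  obtain ⟨T, hle, hT⟩ := exists_spanning_tree hc
  have hTne : T ≠ G := fun h => hnt (h ▸ hT)
  obtain ⟨u, v, huv, hTuv⟩ : ∃ u v, G.Adj u v ∧ ¬ T.Adj u v := by
    by_contra h
    push_neg at h
    exact hTne (le_antisymm hle fun {a b} hab => h a b hab)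
  obtain ⟨P, hP, hPu⟩ := hT.existsUnique_path u v
  have hne : u ≠ v := huv.ne
  obtain ⟨w1, ha1, P1, hPeq1⟩ := Walk.exists_eq_cons_of_ne hne P
  obtain ⟨w2, ha2, P2, hPeq2⟩ := Walk.exists_eq_cons_of_ne hne.symm P.reverse
  set f1 : Sym2 V := s(u, w1) with hf1def
  set fl : Sym2 V := s(v, w2) with hfldef
  have hf1P : f1 ∈ P.edges := by rw [hPeq1]; simp [hf1def]
  have hflP : fl ∈ P.edges := by
    have : fl ∈ P.reverse.edges := by rw [hPeq2]; simp [hfldef]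
    rwa [Walk.edges_reverse, List.mem_reverse] at this
  have hne1 : f1 ≠ fl := by
    intro h
    rw [hf1def, hfldef, Sym2.eq_iff] at h
    rcases h with ⟨h1, h2⟩ | ⟨h1, h2⟩
    · exact hne h1
    · exact hTuv (h2 ▸ ha1)
  have hf1T : f1 ∈ T.edgeSet := P.edges_subset_edgeSet hf1P
  have hflT : fl ∈ T.edgeSet := P.edges_subset_edgeSet hflP
  haveI : Fintype T.edgeSet := Fintype.ofFinite _
  have hTcard : T.edgeFinset.card + 1 = Fintype.card V := hT.card_edgeFinset
  have hflF : fl ∈ T.edgeFinset := mem_edgeFinset.mpr hflT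
  set S : Finset (Sym2 V) := T.edgeFinset.erase fl with hSdef
  have hScard : S.card = Fintype.card V - 2 := by
    rw [hSdef, Finset.card_erase_of_mem hflF]; omega
  have hf1S : f1 ∈ S := Finset.mem_erase.mpr ⟨hne1, mem_edgeFinset.mpr hf1T⟩
  set eqv := S.equivFin with heqv
  set c : Sym2 V → Fin (Fintype.card V - 2) := fun z =>
    if h : z ∈ S then (finCongr hScard) (eqv ⟨z, h⟩)
    else (finCongr hScard) (eqv ⟨f1, hf1S⟩) with hcdef
  have hinj : ∀ d ∈ T.edgeSet, ∀ g ∈ T.edgeSet, d ≠ fl → g ≠ fl → c d = c g → d = g := by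
    intro d hd g hg hdfl hgfl hdg
    have hdS : d ∈ S := Finset.mem_erase.mpr ⟨hdfl, mem_edgeFinset.mpr hd⟩
    have hgS : g ∈ S := Finset.mem_erase.mpr ⟨hgfl, mem_edgeFinset.mpr hg⟩
    rw [hcdef] at hdg
    simp only [dif_pos hdS, dif_pos hgS] at hdg
    exact Subtype.ext_iff.mp (eqv.injective ((finCongr hScard).injective hdg))
  have hcl : c fl = c f1 := by
    have h1 : fl ∉ S := Finset.notMem_erase _ _
    rw [hcdef]
    simp only [dif_neg h1, dif_pos hf1S]
  have hce : c s(u, v) = c f1 := by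
    have h1 : s(u, v) ∉ S := fun h =>
      hTuv ((mem_edgeSet T).mp (mem_edgeFinset.mp (Finset.mem_of_mem_erase h)))
    rw [hcdef]
    simp only [dif_neg h1, dif_pos hf1S]
  refine ⟨c, fun x y => ?_⟩
  obtain ⟨R0⟩ := hT.isConnected.preconnected x y
  set R1 : T.Walk x y := (R0.toPath : T.Walk x y) with hR1def
  have hR1 : R1.IsPath := R0.toPath.2
  by_cases hcase : f1 ∈ R1.edges ∧ fl ∈ R1.edges
  · -- surgery case
    have hu : u ∈ R1.support := R1.fst_mem_support_of_mem_edges hcase.1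
    have hv : v ∈ R1.support := R1.fst_mem_support_of_mem_edges hcase.2
    set X := R1.takeUntil u hu with hXdef
    set B := R1.dropUntil u hu with hBdef
    have hXB : X.append B = R1 := R1.take_spec hu
    have hXpath : X.IsPath := hR1.takeUntil hu
    have hvXB : v ∈ X.support ∨ v ∈ B.support := by
      have h := hv
      rw [← hXB, Walk.mem_support_append_iff] at h
      exact h
    rcases hvXB with hvX | hvB
    · -- v comes before u
      set X1 := X.takeUntil v hvX with hX1def
      set M := X.dropUntil v hvX with hMdef
      have h2 : X1.append M = X := X.take_spec hvX
      have hRdecomp : (X1.append (M.append B)).IsPath := by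
        rw [Walk.append_assoc, h2, hXB]; exact hR1
      have hMpath : M.IsPath := hXpath.dropUntil hvX
      have hMeq : M = P.reverse := by
        have h3 : M.reverse = P := hPu _ hMpath.reverse
        rw [← h3, Walk.reverse_reverse]
      have hf1M : f1 ∈ M.edges := by
        rw [hMeq, Walk.edges_reverse, List.mem_reverse]; exact hf1P
      have hflM : fl ∈ M.edges := by
        rw [hMeq, Walk.edges_reverse, List.mem_reverse]; exact hflP
      exact aux_surgery hle huv.symm (fun h => hTuv h.symm) X1 M B hRdecomp c f1 fl
        hf1T hf1M hflM hne1 hinj (by rw [Sym2.eq_swap]; exact hce)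
    · -- u comes before v
      set M := B.takeUntil v hvB with hMdef
      set Y := B.dropUntil v hvB with hYdef
      have h2 : M.append Y = B := B.take_spec hvB
      have hRdecomp : (X.append (M.append Y)).IsPath := by
        rw [h2, hXB]; exact hR1
      have hMpath : M.IsPath := (hR1.dropUntil hu).takeUntil hvB
      have hMeq : M = P := hPu _ hMpath
      have hf1M : f1 ∈ M.edges := by rw [hMeq]; exact hf1P
      have hflM : fl ∈ M.edges := by rw [hMeq]; exact hflP
      exact aux_surgery hle huv hTuv X M Y hRdecomp c f1 fl
        hf1T hf1M hflM hne1 hinj hce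
  · -- no surgery needed
    have hsub : ∀ e ∈ R1.edges, e ∈ G.edgeSet := fun e he =>
      edgeSet_mono hle (R1.edges_subset_edgeSet he)
    refine ⟨R1.transfer G hsub, hR1.transfer hsub, ?_⟩
    rw [Walk.edges_transfer]
    refine List.Nodup.map_on ?_ hR1.isTrail.edges_nodup
    intro d hd g hg hdg
    have hdT : d ∈ T.edgeSet := R1.edges_subset_edgeSet hd
    have hgT : g ∈ T.edgeSet := R1.edges_subset_edgeSet hg
    rcases not_and_or.mp hcase with hf1n | hfln
    · by_cases hdfl : d = fl
      · by_cases hgfl : g = fl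
        · rw [hdfl, hgfl]
        · exfalso
          subst hdfl
          have hgf1 : c g = c f1 := hdg.symm.trans hcl
          exact hf1n ((hinj g hgT f1 hf1T hgfl hne1 hgf1) ▸ hg)
      · by_cases hgfl : g = fl
        · exfalso
          subst hgfl
          have hdf1 : c d = c f1 := hdg.trans hcl
          exact hf1n ((hinj d hdT f1 hf1T hdfl hne1 hdf1) ▸ hd)
        · exact hinj d hdT g hgT hdfl hgfl hdg
    · have hdfl : d ≠ fl := fun h => hfln (h ▸ hd)
      have hgfl : g ≠ fl := fun h => hfln (h ▸ hg)
      exact hinj d hdT g hgT hdfl hgfl hdg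

/-- For a connected graph `G` on `n ≥ 2` vertices, `rc(G) = n - 1` iff `G` is a tree. -/
theorem rc_eq_card_sub_one_iff_isTree {V : Type*} [Fintype V] (G : SimpleGraph V)
    (hn : 2 ≤ Fintype.card V) (hconn : G.Connected) :
    rc G = Fintype.card V - 1 ↔ G.IsTree := by
  constructor
  · intro h
    by_contra hnt
    obtain ⟨c, hrb⟩ := rainbow_of_not_tree hconn hnt
    have hle : rc G ≤ Fintype.card V - 2 := Nat.sInf_le ⟨c, hrb⟩
    omega
  · intro hT
    exact rc_of_tree hn hT
end

section
/- Let G be a connected graph with vertex set {v₁,…,vₙ} and edge set E, and let c be an edge coloring of G. Let G₀ be the graph obtained from G by attaching a new pendant vertex uᵢ to vᵢ (with pendant edge e'ᵢ = uᵢvᵢ) for each 1 ≤ i ≤ n, and let G' be the line graph of G₀. Define a vertex coloring c' of G' by c'(e) = c(e) for every original edge e of G, and c'(e'ᵢ) = c₀ for all i, where c₀ is a single new color not used by c. Then G' is rainbow vertex-connected under c' if and only if G is rainbow connected under c. -/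
open SimpleGraph

/-- The graph `G₀` obtained from `G` by attaching a new pendant vertex `uᵢ = Sum.inr vᵢ`
to each original vertex `vᵢ = Sum.inl vᵢ`. -/
def pendantGraph {V : Type*} (G : SimpleGraph V) : SimpleGraph (V ⊕ V) where
  Adj x y := match x, y with
    | Sum.inl a, Sum.inl b => G.Adj a b
    | Sum.inl a, Sum.inr b => a = b
    | Sum.inr a, Sum.inl b => a = b
    | Sum.inr _, Sum.inr _ => False
  symm := by
    constructor
    intro x y h
    cases x <;> cases y <;> simp_all [SimpleGraph.adj_comm, eq_comm]
  loopless := by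
    constructor
    intro x h
    cases x <;> simp_all

/-- The coloring of the edges of `pendantGraph G` (i.e. of the vertices of its line
graph): an original edge `e` of `G` keeps its color `Sum.inl (c e)`, and every pendant
edge receives the single new color `Sum.inr ()`, which is distinct from all colors
`Sum.inl (c e)` of original edges. -/
def pendantColoring {V α : Type*} (c : Sym2 V → α) : Sym2 (V ⊕ V) → α ⊕ Unit :=
  Sym2.lift ⟨fun x y => match x, y with
    | Sum.inl a, Sum.inl b => Sum.inl (c s(a, b))
    | _, _ => Sum.inr (), by
      intro x y
      cases x <;> cases y <;> simp [Sym2.eq_swap]⟩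


-- generic nodup lemma
lemma nodup_map_of_forall_mem {β γ : Type*} {g : β → γ} {l l' : List β}
    (h : (l.map g).Nodup) (h1 : l'.Nodup) (h2 : ∀ x ∈ l', x ∈ l) : (l'.map g).Nodup :=
  h1.map_on fun x hx y hy hxy => List.inj_on_of_nodup_map h (h2 x hx) (h2 y hy) hxy

lemma sym2_eq_of_mem {β : Type*} {z : Sym2 β} {x y : β} (hxy : x ≠ y)
    (hx : x ∈ z) (hy : y ∈ z) : z = s(x, y) := by
  induction z using Sym2.inductionOn with
  | hf p q =>
    simp only [Sym2.mem_iff] at hx hy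
    rcases hx with rfl | rfl <;> rcases hy with rfl | rfl <;>
      first | exact absurd rfl hxy | rfl | exact Sym2.eq_swap

lemma adj_of_mem_edgeSet {β : Type*} {G : SimpleGraph β} {z : Sym2 β} {x y : β}
    (hz : z ∈ G.edgeSet) (hxy : x ≠ y) (hx : x ∈ z) (hy : y ∈ z) : G.Adj x y := by
  rw [sym2_eq_of_mem hxy hx hy] at hz; exact hz

lemma list_internal {β : Type*} {s : List β} {a b : β} (hnd : s.Nodup)
    (hh : s.head? = some a) (hl : s.getLast? = some b) :
    ∀ x, x ∈ s.tail.dropLast ↔ (x ∈ s ∧ x ≠ a ∧ x ≠ b) := by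
  intro x
  match s with
  | [] => simp at hh
  | [a'] =>
    simp only [List.head?_cons, Option.some.injEq] at hh
    simp only [List.getLast?_singleton, Option.some.injEq] at hl
    subst hh; subst hl
    simp
  | a' :: y :: t =>
    simp only [List.head?_cons, Option.some.injEq] at hh
    subst hh
    have ht : (y :: t) ≠ [] := by simp
    have hgl : (y :: t).getLast ht = b := by
      have := List.getLast?_eq_getLast ht
      rw [List.getLast?_cons_cons] at hl
      rw [this] at hl; exact (Option.some.injEq _ _).mp hl
    have hdec : (y :: t).dropLast ++ [(y :: t).getLast ht] = y :: t :=
      List.dropLast_append_getLast ht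
    obtain ⟨hat, hndt⟩ := List.nodup_cons.mp hnd
    constructor
    · intro hx
      have hxt : x ∈ y :: t := List.dropLast_subset _ hx
      refine ⟨List.mem_cons_of_mem _ hxt, ?_, ?_⟩
      · rintro rfl; exact hat hxt
      · rintro rfl
        have : (y :: t).getLast ht ∉ (y :: t).dropLast := by
          have hnd2 : ((y :: t).dropLast ++ [(y :: t).getLast ht]).Nodup := by
            rw [hdec]; exact hndt
          have := List.disjoint_of_nodup_append hnd2
          intro hmem; exact this hmem (by simp)
        rw [hgl] at this; exact this hx
    · rintro ⟨hxs, hxa, hxb⟩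
      have hxt : x ∈ y :: t := by
        rcases List.mem_cons.mp hxs with rfl | h
        · exact absurd rfl hxa
        · exact h
      rw [← hdec] at hxt
      rcases List.mem_append.mp hxt with h | h
      · exact h
      · simp only [List.mem_singleton] at h
        rw [hgl] at h; exact absurd h hxb

lemma walk_internal {β : Type*} {G : SimpleGraph β} {a b : β} (p : G.Walk a b)
    (hp : p.IsPath) : ∀ x, x ∈ p.support.tail.dropLast ↔ (x ∈ p.support ∧ x ≠ a ∧ x ≠ b) := by
  apply list_internal hp.support_nodup
  · rw [p.support_eq_cons]; rfl
  · rw [List.getLast?_eq_head?_reverse, ← p.support_reverse, p.reverse.support_eq_cons]; rfl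

lemma pc_map_inl {V α : Type*} (c : Sym2 V → α) (E : Sym2 V) :
    pendantColoring c (Sym2.map Sum.inl E) = Sum.inl (c E) := by
  induction E using Sym2.inductionOn with
  | hf x y => rw [Sym2.map_pair_eq]; rfl

lemma pendant_adj_inl_inl {V : Type*} {G : SimpleGraph V} {a b : V} :
    (pendantGraph G).Adj (Sum.inl a) (Sum.inl b) ↔ G.Adj a b := Iff.rfl

lemma pendant_edge_mem {V : Type*} {G : SimpleGraph V} (a : V) :
    s(Sum.inl a, Sum.inr a) ∈ (pendantGraph G).edgeSet := by
  rw [SimpleGraph.mem_edgeSet]; exact rfl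

lemma orig_edge_mem {V : Type*} {G : SimpleGraph V} {a b : V} (h : G.Adj a b) :
    s(Sum.inl a, Sum.inl b) ∈ (pendantGraph G).edgeSet := by
  rw [SimpleGraph.mem_edgeSet]; exact h

lemma exists_inl_mem {V : Type*} {G : SimpleGraph V} {e : Sym2 (V ⊕ V)}
    (he : e ∈ (pendantGraph G).edgeSet) : ∃ a : V, Sum.inl a ∈ e := by
  induction e using Sym2.inductionOn with
  | hf x y =>
    rw [SimpleGraph.mem_edgeSet] at he
    cases x with
    | inl a => exact ⟨a, by simp⟩
    | inr a =>
      cases y with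
      | inl b => exact ⟨b, by simp⟩
      | inr b => exact absurd he (by exact fun h => h)

lemma lemA {β : Type*} {G : SimpleGraph β} {e f : G.edgeSet} (Q : G.lineGraph.Walk e f) :
    ∀ x y : β, x ∈ e.val → y ∈ f.val →
      ∃ W : G.Walk x y, ∀ E ∈ W.edges, E ∈ Q.support.map Subtype.val := by
  induction Q with
  | nil =>
    intro x y hx hy
    rename_i e'
    by_cases hxy : x = y
    · subst hxy; exact ⟨SimpleGraph.Walk.nil, by simp⟩
    · refine ⟨SimpleGraph.Walk.cons (adj_of_mem_edgeSet e'.2 hxy hx hy) SimpleGraph.Walk.nil, ?_⟩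
      intro E hE
      simp only [SimpleGraph.Walk.edges_cons, SimpleGraph.Walk.edges_nil,
        List.mem_singleton] at hE
      subst hE
      simp only [SimpleGraph.Walk.support_nil, List.map_cons, List.map_nil, List.mem_singleton,
        List.mem_cons]
      left
      exact (sym2_eq_of_mem hxy hx hy).symm
  | cons h Q' ih =>
    intro x y hx hy
    rename_i e₁ e₂ f'
    obtain ⟨hne, z, hz1, hz2⟩ := SimpleGraph.lineGraph_adj_iff_exists.mp h
    obtain ⟨W₂, hW₂⟩ := ih z y hz2 hy
    by_cases hxz : x = z
    · subst hxz
      refine ⟨W₂, fun E hE => ?_⟩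
      simp only [SimpleGraph.Walk.support_cons, List.map_cons, List.mem_cons]
      exact Or.inr (hW₂ E hE)
    · refine ⟨SimpleGraph.Walk.cons (adj_of_mem_edgeSet e₁.2 hxz hx hz1) W₂, fun E hE => ?_⟩
      simp only [SimpleGraph.Walk.edges_cons, List.mem_cons] at hE
      simp only [SimpleGraph.Walk.support_cons, List.map_cons, List.mem_cons]
      rcases hE with rfl | hE
      · exact Or.inl (sym2_eq_of_mem hxz hx hz1).symm
      · exact Or.inr (hW₂ E hE)

lemma lemC {V : Type*} {G : SimpleGraph V} :
    ∀ {x z : V ⊕ V} (W : (pendantGraph G).Walk x z), W.IsPath →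
      ∀ a v, x = Sum.inl a → z = Sum.inr v →
        ∃ q : G.Walk a v, ∀ E ∈ q.edges, Sym2.map Sum.inl E ∈ W.edges := by
  intro x z W
  induction W with
  | nil =>
    intro _ a v ha hv
    subst ha
    exact absurd hv (by simp)
  | cons h W' ih =>
    intro hp a v ha hv
    subst ha; subst hv
    rename_i y
    cases y with
    | inl b =>
      obtain ⟨q', hq'⟩ := ih hp.of_cons b v rfl rfl
      refine ⟨SimpleGraph.Walk.cons (h : G.Adj a b) q', fun E hE => ?_⟩
      change E ∈ s(a, b) :: q'.edges at hE
      simp only [SimpleGraph.Walk.edges_cons, List.mem_cons] at hE ⊢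
      rcases hE with rfl | hE
      · exact Or.inl (by rw [Sym2.map_pair_eq])
      · exact Or.inr (hq' E hE)
    | inr b =>
      have hab : a = b := h
      subst hab
      cases W' with
      | nil => exact ⟨SimpleGraph.Walk.nil, by simp⟩
      | cons h' W'' =>
        rename_i z
        cases z with
        | inl z' =>
          have hz : a = z' := h'
          subst hz
          have hnd := hp.support_nodup
          rw [SimpleGraph.Walk.support_cons, SimpleGraph.Walk.support_cons] at hnd
          exact absurd (List.mem_cons_of_mem _ W''.start_mem_support)
            (List.nodup_cons.mp hnd).1
        | inr z' => exact absurd h' (fun hh => hh)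

lemma lemB {V : Type*} {G : SimpleGraph V} {u v : V} (huv : u ≠ v)
    (R : (pendantGraph G).Walk (Sum.inr u) (Sum.inr v)) (hR : R.IsPath) :
    ∃ q : G.Walk u v, ∀ E ∈ q.edges, Sym2.map Sum.inl E ∈ R.edges := by
  cases R with
  | nil => exact absurd rfl huv
  | cons h R₁ =>
    rename_i w
    cases w with
    | inl w' =>
      have : u = w' := h
      subst this
      obtain ⟨q, hq⟩ := lemC R₁ hR.of_cons u v rfl rfl
      exact ⟨q, fun E hE => by
        simp only [SimpleGraph.Walk.edges_cons, List.mem_cons]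
        exact Or.inr (hq E hE)⟩
    | inr w' => exact absurd h (fun hh => hh)

lemma lemD {V : Type*} {G : SimpleGraph V} {a b : V} (P : G.Walk a b) :
    ∀ (e f : (pendantGraph G).edgeSet), Sum.inl a ∈ e.val → Sum.inl b ∈ f.val →
      ∃ Q : (pendantGraph G).lineGraph.Walk e f,
        ∀ x ∈ Q.support, x.val ∈ e.val :: f.val :: P.edges.map (Sym2.map Sum.inl) := by
  induction P with
  | nil =>
    intro e f he hf
    by_cases hef : e = f
    · subst hef; exact ⟨SimpleGraph.Walk.nil, by simp⟩
    · refine ⟨SimpleGraph.Walk.cons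
        (SimpleGraph.lineGraph_adj_iff_exists.mpr ⟨hef, _, he, hf⟩) SimpleGraph.Walk.nil, ?_⟩
      intro x hx
      simp only [SimpleGraph.Walk.support_cons, SimpleGraph.Walk.support_nil,
        List.mem_cons, List.not_mem_nil, or_false] at hx
      rcases hx with rfl | rfl
      · simp
      · simp
  | cons h P' ih =>
    rename_i a' b' w
    intro e f he hf
    set E₀ : (pendantGraph G).edgeSet := ⟨s(Sum.inl a', Sum.inl b'), orig_edge_mem h⟩ with hE₀
    have hE₀v : (E₀ : Sym2 (V ⊕ V)) = s(Sum.inl a', Sum.inl b') := rfl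
    have hbE₀ : Sum.inl b' ∈ E₀.val := by simp [hE₀]
    obtain ⟨Q', hQ'⟩ := ih E₀ f hbE₀ hf
    by_cases heE : e = E₀
    · subst heE
      refine ⟨Q', fun x hx => ?_⟩
      have h1 := hQ' x hx
      rw [hE₀v] at h1
      simp only [SimpleGraph.Walk.edges_cons, List.map_cons, Sym2.map_pair_eq,
        List.mem_cons, hE₀v] at h1 ⊢
      tauto
    · have haE₀ : Sum.inl a' ∈ E₀.val := by simp [hE₀]
      refine ⟨SimpleGraph.Walk.cons
        (SimpleGraph.lineGraph_adj_iff_exists.mpr ⟨heE, _, he, haE₀⟩) Q', fun x hx => ?_⟩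
      simp only [SimpleGraph.Walk.support_cons, List.mem_cons] at hx
      rcases hx with rfl | hx
      · simp
      · have h1 := hQ' x hx
        rw [hE₀v] at h1
        simp only [SimpleGraph.Walk.edges_cons, List.map_cons, Sym2.map_pair_eq,
          List.mem_cons] at h1 ⊢
        tauto

/-- Let `G₀` be obtained from a connected graph `G` by attaching a pendant vertex to each
vertex, and let `G'` be the line graph of `G₀`, whose vertices (the edges of `G₀`) are
colored by keeping the color of each original edge of `G` and giving all pendant edges one
common new color. Then `G'` is rainbow vertex-connected iff `G` is rainbow connected. -/
theorem lineGraph_pendant_rainbowVertexConnected_iff {V α : Type*} (G : SimpleGraph V)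
    (hconn : G.Connected) (c : Sym2 V → α) :
    IsRainbowVertexConnected (pendantGraph G).lineGraph
      (fun e => pendantColoring c e.val) ↔ IsRainbowConnected G c := by
  classical
  constructor
  · -- rainbow vertex-connected line graph → rainbow connected
    intro hrvc u v
    by_cases huv : u = v
    · subst huv
      exact ⟨SimpleGraph.Walk.nil, SimpleGraph.Walk.IsPath.nil, by simp⟩
    · obtain ⟨Q, hQp, hQc⟩ := hrvc ⟨s(Sum.inl u, Sum.inr u), pendant_edge_mem u⟩
        ⟨s(Sum.inl v, Sum.inr v), pendant_edge_mem v⟩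
      obtain ⟨W, hW⟩ := lemA Q (Sum.inr u) (Sum.inr v) (by simp) (by simp)
      obtain ⟨q, hq⟩ := lemB huv W.bypass W.bypass_isPath
      refine ⟨q.bypass, q.bypass_isPath, ?_⟩
      have hmem : ∀ y ∈ q.bypass.edges.map (Sym2.map Sum.inl),
          y ∈ (Q.support.tail.dropLast).map Subtype.val := by
        rintro y hy
        obtain ⟨E, hE, rfl⟩ := List.mem_map.mp hy
        have h1 : Sym2.map Sum.inl E ∈ W.bypass.edges := hq E (q.edges_bypass_subset hE)
        have h2 : Sym2.map Sum.inl E ∈ Q.support.map Subtype.val :=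
          hW _ (W.edges_bypass_subset h1)
        obtain ⟨x, hx, hxval⟩ := List.mem_map.mp h2
        have hxne : ∀ w : V, x.val ≠ s(Sum.inl w, Sum.inr w) := by
          intro w hcontra
          have hmem2 : Sum.inr w ∈ x.val := by rw [hcontra]; simp
          rw [hxval] at hmem2
          obtain ⟨y', _, hy'⟩ := Sym2.mem_map.mp hmem2
          exact Sum.inl_ne_inr hy'
        have hxI : x ∈ Q.support.tail.dropLast := by
          refine (walk_internal Q hQp x).mpr ⟨hx, ?_, ?_⟩
          · intro hxe; exact hxne u (by rw [hxe])
          · intro hxe; exact hxne v (by rw [hxe])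
        exact List.mem_map.mpr ⟨x, hxI, hxval⟩
      have hnd1 : ((Q.support.tail.dropLast.map Subtype.val).map (pendantColoring c)).Nodup := by
        rw [List.map_map]; exact hQc
      have hnd2 : (q.bypass.edges.map (Sym2.map (Sum.inl : V → V ⊕ V))).Nodup :=
        List.Nodup.map (Sym2.map.injective Sum.inl_injective)
          q.bypass_isPath.isTrail.edges_nodup
      have hnd3 := nodup_map_of_forall_mem hnd1 hnd2 hmem
      rw [List.map_map,
        show (pendantColoring c ∘ Sym2.map Sum.inl) = Sum.inl ∘ c from funext (pc_map_inl c),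
        ← List.map_map] at hnd3
      exact hnd3.of_map _
  · -- rainbow connected → rainbow vertex-connected line graph
    intro hrc e f
    obtain ⟨a, ha⟩ := exists_inl_mem e.2
    obtain ⟨b, hb⟩ := exists_inl_mem f.2
    obtain ⟨P, hPp, hPc⟩ := hrc a b
    obtain ⟨Q, hQ⟩ := lemD P e f ha hb
    refine ⟨Q.bypass, Q.bypass_isPath, ?_⟩
    have hInd : (Q.bypass.support.tail.dropLast).Nodup :=
      ((List.dropLast_sublist _).trans (List.tail_sublist _)).nodup
        Q.bypass_isPath.support_nodup
    have hmem : ∀ y ∈ (Q.bypass.support.tail.dropLast).map Subtype.val,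
        y ∈ P.edges.map (Sym2.map Sum.inl) := by
      rintro y hy
      obtain ⟨x, hxI, rfl⟩ := List.mem_map.mp hy
      obtain ⟨hxs, hxe, hxf⟩ := (walk_internal Q.bypass Q.bypass_isPath x).mp hxI
      have h1 := hQ x (Q.support_bypass_subset hxs)
      rcases List.mem_cons.mp h1 with h2 | h2
      · exact absurd (Subtype.ext h2) hxe
      rcases List.mem_cons.mp h2 with h3 | h3
      · exact absurd (Subtype.ext h3) hxf
      · exact h3
    have hL : ((P.edges.map (Sym2.map Sum.inl)).map (pendantColoring c)).Nodup := by
      rw [List.map_map,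
        show (pendantColoring c ∘ Sym2.map Sum.inl) = Sum.inl ∘ c from funext (pc_map_inl c),
        ← List.map_map]
      exact hPc.map Sum.inl_injective
    have hfin := nodup_map_of_forall_mem hL (hInd.map Subtype.val_injective) hmem
    rw [List.map_map] at hfin
    exact hfin
end
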